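/- In the tit-for-tat production dynamic, for every player i and every player j with v_j < v* = max_k v_k, the fraction y_{i,j}(t) converges to 0 as t → ∞. -/

import Mathlib

open Filter Finset

theorem stmt_10
(n : ℕ) (x : ℕ → Fin n → ℝ) (y : ℕ → Fin n → Fin n → ℝ) (v : Fin n → ℝ)
    (hv : ∀ j, 0 < v j)
    (hx : ∀ t i, 0 < x t i)
    (hy : ∀ t i j, 0 < y t i j)
    (hsum : ∀ t i, ∑ j, y t i j = 1)
    (hprod : ∀ t i, x (t + 1) i = ∑ j, v j * (y t j i * x t j))
    (hupd : ∀ t i j, y (t + 1) i j = v j * (y t j i * x t j) / x (t + 1) i)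
(vstar : ℝ) (hmax : ∀ j, v j ≤ vstar) (iStar : Fin n) (hiStar : v iStar = vstar)
    (i j : Fin n) (hj : v j < vstar) :
    Tendsto (fun t => y t i j) atTop (nhds 0) := by
  have hvs : (0:ℝ) < vstar := hiStar ▸ hv iStar
  set q : ℝ := v j / vstar with hqdef
  have hq0 : 0 < q := div_pos (hv j) hvs
  have hq1 : q < 1 := (div_lt_one hvs).2 hj
  set r : ℕ → ℝ := fun t => y t i j / y t i iStar with hrdef
  have key : ∀ t, r (t + 2) = q * r t := by
    intro t
    show y (t + 1 + 1) i j / y (t + 1 + 1) i iStar = q * (y t i j / y t i iStar)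
    rw [hupd (t+1) i j, hupd (t+1) i iStar, hupd t j i, hupd t iStar i, hiStar]
    have h1 := (hx (t+1) j).ne'
    have h2 := (hx (t+1) iStar).ne'
    have h3 := (hx (t+2) i).ne'
    have h4 := (hx t i).ne'
    have h5 := (hy t i iStar).ne'
    have h6 := (hv i).ne'
    have h7 := hvs.ne'
    rw [hqdef]
    field_simp
  set C : ℝ := max (r 0) (r 1) with hCdef
  have hbound : ∀ t, r t ≤ C * q ^ (t / 2) := by
    intro t
    induction t using Nat.strong_induction_on with
    | _ t ih =>
      match t with
      | 0 =>
        calc r 0 ≤ C := le_max_left _ _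
          _ = C * q ^ (0 / 2) := by norm_num
      | 1 =>
        calc r 1 ≤ C := le_max_right _ _
          _ = C * q ^ (1 / 2) := by norm_num
      | (t+2) =>
        have ht := ih t (by omega)
        calc r (t + 2) = q * r t := key t
          _ ≤ q * (C * q ^ (t / 2)) := by
              exact mul_le_mul_of_nonneg_left ht hq0.le
          _ = C * q ^ (t / 2 + 1) := by ring
          _ = C * q ^ ((t + 2) / 2) := by
              rw [Nat.add_div_right t (by norm_num)]
  have hle : ∀ t, y t i j ≤ r t := by
    intro t
    have h1 : y t i iStar ≤ 1 := by
      have hs := hsum t i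
      calc y t i iStar ≤ ∑ k, y t i k :=
            Finset.single_le_sum (fun k _ => (hy t i k).le) (mem_univ iStar)
        _ = 1 := hs
    rw [le_div_iff₀ (hy t i iStar)]
    exact mul_le_of_le_one_right (hy t i j).le h1
  have hdiv : Tendsto (fun t : ℕ => t / 2) atTop atTop := by
    apply Filter.tendsto_atTop.mpr
    intro b
    filter_upwards [Filter.eventually_ge_atTop (2 * b)] with t ht
    omega
  have htop : Tendsto (fun t : ℕ => C * q ^ (t / 2)) atTop (nhds 0) := by
    have hpow : Tendsto (fun m : ℕ => q ^ m) atTop (nhds 0) :=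
      tendsto_pow_atTop_nhds_zero_of_lt_one hq0.le hq1
    have := (hpow.comp hdiv).const_mul C
    simpa using this
  refine tendsto_of_tendsto_of_tendsto_of_le_of_le tendsto_const_nhds htop
    (fun t => (hy t i j).le) (fun t => (hle t).trans (hbound t))
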